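/- arXiv:2011.09981 — 2 statements merged into one kernel-verified Lean document; each statement's English description precedes it below -/
import Mathlib

section
/- Under the conditions S_I–S_IV on the sequence of random vectors of random length, and assuming additionally that all the variables τ_k and u_{k,i} are integer-valued, for every integer n ≥ 2 and every integer x ≥ 1 the following identity holds: P( Z₊(n) + u_{ν₊(n)+1, γ₊(n)} = x and τ₁ ≤ n ) = Q · P( Z*₊(n) = x and γ*₊(n) = 0 ). -/
open MeasureTheory ProbabilityTheory Filter Real Set
open scoped ENNReal Topology

noncomputable section

namespace CompoundRenewal

/-- A sequence `{(τ_k, (u_{k,1}, …, u_{k,τ_k}))}_{k ≥ 1}` of mutually independent random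
vectors of random length satisfying conditions `S_I`–`S_IV`, together with the auxiliary
independent vector `(τ*, ζ*)` whose distribution is
`P(τ* = i, ζ* ∈ dy) = (1/Q) P(τ ≥ i + 1, u_i ∈ dy)`, `Q = E τ`.
The vector of index `k` is encoded as the pair `(τ_k, (u_{k,i})_{i ≤ τ_k})`, where the
array is extended by `0` for `i > τ_k` (and `u_{k,0} = 0`). -/
structure CRP (Ω : Type) [MeasureSpace Ω] where
  /-- the constant `c₁ > 0` of condition `S_II` -/
  c₁ : ℝ
  c₁_pos : 0 < c₁
  /-- the lengths `τ_k`, `k ≥ 1` (positive integers) -/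
  tauSeq : ℕ → Ω → ℕ
  /-- the weights `u_{k,i}`, `k ≥ 1`, `0 ≤ i ≤ τ_k` -/
  uSeq : ℕ → ℕ → Ω → ℝ
  tau_pos : ∀ k ω, 1 ≤ tauSeq k ω
  u_zero : ∀ k ω, uSeq k 0 ω = 0
  tau_meas : ∀ k, Measurable (tauSeq k)
  u_meas : ∀ k i, Measurable (uSeq k i)
  /-- `S_I` : mutual independence of the vectors of indices `k ≥ 1` -/
  indep : iIndepFun
    (fun k : ℕ => fun ω => ((tauSeq (k + 1) ω : ℕ),
      fun i : ℕ => if i ≤ tauSeq (k + 1) ω then uSeq (k + 1) i ω else 0)) ℙ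
  /-- `S_I` : the vectors of indices `k ≥ 2` are identically distributed -/
  ident : ∀ k : ℕ, 2 ≤ k →
    Measure.map (fun ω => ((tauSeq k ω : ℕ),
        fun i : ℕ => if i ≤ tauSeq k ω then uSeq k i ω else 0)) ℙ
      = Measure.map (fun ω => ((tauSeq 2 ω : ℕ),
        fun i : ℕ => if i ≤ tauSeq 2 ω then uSeq 2 i ω else 0)) ℙ
  /-- `S_II` : positivity, the lower bound `c₁` and the maximality of the last weight -/
  sII : ∀ᵐ ω ∂ℙ, 0 < uSeq 1 (tauSeq 1 ω) ω ∧
    ∀ k : ℕ, 2 ≤ k → ∀ i : ℕ, 1 ≤ i → i ≤ tauSeq k ω →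
      c₁ ≤ uSeq k i ω ∧ uSeq k i ω ≤ uSeq k (tauSeq k ω) ω
  /-- `S_III` : exponential moments -/
  sIII : ∃ C : ℝ, 0 < C ∧
    (∫⁻ ω, ENNReal.ofReal (Real.exp (C * (tauSeq 1 ω : ℝ))) ∂ℙ < ⊤) ∧
    (∫⁻ ω, ENNReal.ofReal (Real.exp (C * (tauSeq 2 ω : ℝ))) ∂ℙ < ⊤) ∧
    (∫⁻ ω, ENNReal.ofReal (Real.exp (C * uSeq 1 (tauSeq 1 ω) ω)) ∂ℙ < ⊤) ∧
    (∫⁻ ω, ENNReal.ofReal (Real.exp (C * uSeq 2 (tauSeq 2 ω) ω)) ∂ℙ < ⊤)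
  /-- `S_IV` : `P(τ = 1, u_τ ≥ y) > 0` for all `y` in some nonempty interval -/
  sIV : ∃ y₀ y₁ : ℝ, y₀ < y₁ ∧ ∀ y ∈ Set.Ioo y₀ y₁,
    0 < ℙ {ω | tauSeq 2 ω = 1 ∧ y ≤ uSeq 2 (tauSeq 2 ω) ω}
  /-- the auxiliary vector `(τ*, ζ*)` -/
  tauStar : Ω → ℕ
  zetaStar : Ω → ℝ
  tauStar_meas : Measurable tauStar
  zetaStar_meas : Measurable zetaStar
  /-- `(τ*, ζ*)` is independent of the whole sequence -/
  star_indep : IndepFun (fun ω => (tauStar ω, zetaStar ω))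
    (fun ω => fun k : ℕ => ((tauSeq (k + 1) ω : ℕ),
      fun i : ℕ => if i ≤ tauSeq (k + 1) ω then uSeq (k + 1) i ω else 0)) ℙ
  /-- the distribution of `(τ*, ζ*)` : `Q·P(τ* = i, ζ* ∈ s) = P(τ ≥ i + 1, u_i ∈ s)` -/
  star_dist : ∀ i : ℕ, ∀ s : Set ℝ, MeasurableSet s →
    ENNReal.ofReal (∫ ω, (tauSeq 2 ω : ℝ) ∂ℙ) * ℙ {ω | tauStar ω = i ∧ zetaStar ω ∈ s}
      = ℙ {ω | i + 1 ≤ tauSeq 2 ω ∧ uSeq 2 i ω ∈ s}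

variable {Ω : Type} [MeasureSpace Ω]

/-- `ζ_k = u_{k, τ_k}`. -/
def zetaSeq (P : CRP Ω) (k : ℕ) (ω : Ω) : ℝ := P.uSeq k (P.tauSeq k ω) ω

/-- `T_n = τ_1 + ⋯ + τ_n` (with `T_0 = 0`). -/
def Tn (P : CRP Ω) (n : ℕ) (ω : Ω) : ℕ := ∑ k ∈ Finset.Icc 1 n, P.tauSeq k ω

/-- `Z_n = ζ_1 + ⋯ + ζ_n` (with `Z_0 = 0`). -/
def Zn (P : CRP Ω) (n : ℕ) (ω : Ω) : ℝ := ∑ k ∈ Finset.Icc 1 n, zetaSeq P k ω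

/-- `ν₊(n) = max {k ≥ 0 : T_k ≤ n}`. -/
def nuP (P : CRP Ω) (n : ℕ) (ω : Ω) : ℕ := Nat.findGreatest (fun k => Tn P k ω ≤ n) n

/-- `γ₊(n) = n - T_{ν₊(n)}`. -/
def gamP (P : CRP Ω) (n : ℕ) (ω : Ω) : ℕ := n - Tn P (nuP P n ω) ω

/-- The compound renewal process `Z₊(n) = Z_{ν₊(n)}`. -/
def ZP (P : CRP Ω) (n : ℕ) (ω : Ω) : ℝ := Zn P (nuP P n ω) ω

/-- `Q = E τ`. -/
def Q (P : CRP Ω) : ℝ := ∫ ω, (P.tauSeq 2 ω : ℝ) ∂ℙ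

/-- The modified lengths: `τ*₁ = τ₁ + τ*`, `τ*_k = τ_k` for `k ≥ 2`. -/
def tauSt (P : CRP Ω) (k : ℕ) (ω : Ω) : ℕ :=
  if k = 1 then P.tauSeq 1 ω + P.tauStar ω else P.tauSeq k ω

/-- The modified weights: `ζ*₁ = ζ₁ + ζ*`, `ζ*_k = ζ_k` for `k ≥ 2`. -/
def zetaSt (P : CRP Ω) (k : ℕ) (ω : Ω) : ℝ :=
  if k = 1 then zetaSeq P 1 ω + P.zetaStar ω else zetaSeq P k ω

/-- `T*_n`. -/
def TnSt (P : CRP Ω) (n : ℕ) (ω : Ω) : ℕ := ∑ k ∈ Finset.Icc 1 n, tauSt P k ω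

/-- `Z*_n`. -/
def ZnSt (P : CRP Ω) (n : ℕ) (ω : Ω) : ℝ := ∑ k ∈ Finset.Icc 1 n, zetaSt P k ω

/-- `ν*₊(n)`. -/
def nuPSt (P : CRP Ω) (n : ℕ) (ω : Ω) : ℕ := Nat.findGreatest (fun k => TnSt P k ω ≤ n) n

/-- `γ*₊(n) = n - T*_{ν*₊(n)}`. -/
def gamPSt (P : CRP Ω) (n : ℕ) (ω : Ω) : ℕ := n - TnSt P (nuPSt P n ω) ω

/-- The modified compound renewal process `Z*₊(n) = Z*_{ν*₊(n)}`. -/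
def ZPSt (P : CRP Ω) (n : ℕ) (ω : Ω) : ℝ := ZnSt P (nuPSt P n ω) ω


section Aux

variable {Ω : Type} [MeasureSpace Ω]

/-- The padded random vector of index `k+1`. -/
def fvec (P : CRP Ω) (k : ℕ) (ω : Ω) : ℕ × (ℕ → ℝ) :=
  ((P.tauSeq (k + 1) ω : ℕ),
    fun i : ℕ => if i ≤ P.tauSeq (k + 1) ω then P.uSeq (k + 1) i ω else 0)

lemma indep_fvec (P : CRP Ω) : iIndepFun (fvec P) ℙ := P.indep

lemma star_indep_fvec (P : CRP Ω) :
    IndepFun (fun ω => (P.tauStar ω, P.zetaStar ω)) (fun ω (k : ℕ) => fvec P k ω) ℙ :=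
  P.star_indep

lemma ident_fvec (P : CRP Ω) (k : ℕ) (hk : 1 ≤ k) :
    Measure.map (fvec P k) ℙ = Measure.map (fvec P 1) ℙ := by
  have h1 := P.ident (k + 1) (by omega)
  have h2 := P.ident 2 (by omega)
  exact h1.trans h2.symm

lemma meas_eval : Measurable (fun p : ℕ × (ℕ → ℝ) => p.2 p.1) := by
  intro t ht
  have : (fun p : ℕ × (ℕ → ℝ) => p.2 p.1) ⁻¹' t
      = ⋃ j : ℕ, ((Prod.fst ⁻¹' {j}) ∩ {p : ℕ × (ℕ → ℝ) | p.2 j ∈ t}) := by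
    ext p
    simp only [Set.mem_preimage, Set.mem_iUnion, Set.mem_inter_iff, Set.mem_setOf_eq,
      Set.mem_singleton_iff]
    constructor
    · intro h; exact ⟨p.1, rfl, h⟩
    · rintro ⟨j, h1, h2⟩; rwa [h1]
  rw [this]
  exact MeasurableSet.iUnion fun j =>
    (measurable_fst (measurableSet_singleton j)).inter
      (((measurable_pi_apply j).comp measurable_snd) ht)

lemma fvec_meas (P : CRP Ω) (k : ℕ) : Measurable (fvec P k) := by
  refine Measurable.prod (P.tau_meas (k + 1)) ?_
  refine measurable_pi_lambda _ fun i => Measurable.ite ?_ (P.u_meas (k + 1) i) measurable_const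
  exact measurableSet_le measurable_const (P.tau_meas (k + 1))

lemma zeta_meas (P : CRP Ω) (k : ℕ) : Measurable (zetaSeq P k) := by
  have : zetaSeq P k = (fun p : ℕ × (ℕ → ℝ) => p.2 p.1) ∘
      (fun ω => (P.tauSeq k ω, fun i => P.uSeq k i ω)) := rfl
  rw [this]
  exact meas_eval.comp ((P.tau_meas k).prodMk
    (measurable_pi_lambda _ fun i => P.u_meas k i))

lemma fvec_fst (P : CRP Ω) (k : ℕ) (ω : Ω) : (fvec P k ω).1 = P.tauSeq (k + 1) ω := rfl

lemma fvec_eval_self (P : CRP Ω) (k : ℕ) (ω : Ω) :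
    (fvec P k ω).2 (fvec P k ω).1 = zetaSeq P (k + 1) ω := by
  simp [fvec, zetaSeq]

lemma sum_Icc_one {M : Type*} [AddCommMonoid M] (g : ℕ → M) (m : ℕ) :
    ∑ k ∈ Finset.Icc 1 m, g k = ∑ i ∈ Finset.range m, g (i + 1) := by
  induction m with
  | zero => simp
  | succ k ih =>
      rw [Finset.sum_Icc_succ_top (by omega) g, Finset.sum_range_succ, ih]

lemma Tn_zero (P : CRP Ω) (ω : Ω) : Tn P 0 ω = 0 := by simp [Tn]

lemma Tn_succ (P : CRP Ω) (m : ℕ) (ω : Ω) :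
    Tn P (m + 1) ω = Tn P m ω + P.tauSeq (m + 1) ω :=
  Finset.sum_Icc_succ_top (by omega) _

lemma Tn_range (P : CRP Ω) (m : ℕ) (ω : Ω) :
    Tn P m ω = ∑ i ∈ Finset.range m, P.tauSeq (i + 1) ω := sum_Icc_one _ m

lemma Zn_range (P : CRP Ω) (m : ℕ) (ω : Ω) :
    Zn P m ω = ∑ i ∈ Finset.range m, zetaSeq P (i + 1) ω := sum_Icc_one _ m

lemma Tn_strictMono (P : CRP Ω) (ω : Ω) : StrictMono (fun m => Tn P m ω) := by
  apply strictMono_nat_of_lt_succ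
  intro m
  have := P.tau_pos (m + 1) ω
  rw [Tn_succ]; omega

lemma Tn_meas (P : CRP Ω) (m : ℕ) : Measurable (Tn P m) :=
  Finset.measurable_sum _ fun k _ => P.tau_meas k

lemma Zn_meas (P : CRP Ω) (m : ℕ) : Measurable (Zn P m) :=
  Finset.measurable_sum _ fun k _ => zeta_meas P k

/-- Characterisation of `Nat.findGreatest` for renewal times. -/
lemma findGreatest_char {g : ℕ → ℕ} (hg : StrictMono g) (h0 : g 0 = 0) (n m : ℕ) :
    Nat.findGreatest (fun k => g k ≤ n) n = m ↔ g m ≤ n ∧ n < g (m + 1) := by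
  have hle : ∀ k, k ≤ g k := fun k => hg.le_apply
  constructor
  · intro h
    obtain ⟨hmn, hP, hmax⟩ := Nat.findGreatest_eq_iff.1 h
    constructor
    · rcases Nat.eq_zero_or_pos m with rfl | hm
      · simp [h0]
      · exact hP (by omega)
    · by_cases hc : m + 1 ≤ n
      · exact lt_of_not_ge (hmax (Nat.lt_succ_self m) hc)
      · have := hle (m + 1); omega
  · rintro ⟨h1, h2⟩
    apply Nat.findGreatest_eq_iff.2
    refine ⟨le_trans (hle m) h1, fun _ => h1, fun k hk hkn hgk => ?_⟩
    have : g (m + 1) ≤ g k := hg.monotone (by omega)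
    omega

lemma nuP_eq_iff (P : CRP Ω) (n m : ℕ) (ω : Ω) :
    nuP P n ω = m ↔ Tn P m ω ≤ n ∧ n < Tn P (m + 1) ω :=
  findGreatest_char (Tn_strictMono P ω) (Tn_zero P ω) n m

lemma tauSt_pos (P : CRP Ω) (k : ℕ) (ω : Ω) : 1 ≤ tauSt P k ω := by
  unfold tauSt
  split
  · have := P.tau_pos 1 ω; omega
  · exact P.tau_pos k ω

lemma TnSt_zero (P : CRP Ω) (ω : Ω) : TnSt P 0 ω = 0 := by simp [TnSt]

lemma TnSt_succ (P : CRP Ω) (m : ℕ) (ω : Ω) :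
    TnSt P (m + 1) ω = TnSt P m ω + tauSt P (m + 1) ω :=
  Finset.sum_Icc_succ_top (by omega) _

lemma TnSt_strictMono (P : CRP Ω) (ω : Ω) : StrictMono (fun m => TnSt P m ω) := by
  apply strictMono_nat_of_lt_succ
  intro m
  have := tauSt_pos P (m + 1) ω
  rw [TnSt_succ]; omega

lemma nuPSt_eq_iff (P : CRP Ω) (n m : ℕ) (ω : Ω) :
    nuPSt P n ω = m ↔ TnSt P m ω ≤ n ∧ n < TnSt P (m + 1) ω :=
  findGreatest_char (TnSt_strictMono P ω) (TnSt_zero P ω) n m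

lemma TnSt_eq (P : CRP Ω) (m : ℕ) (hm : 1 ≤ m) (ω : Ω) :
    TnSt P m ω = Tn P m ω + P.tauStar ω := by
  induction m with
  | zero => omega
  | succ k ih =>
      rcases Nat.eq_zero_or_pos k with rfl | hk
      · simp [TnSt, Tn, tauSt]
      · rw [TnSt_succ, Tn_succ, ih hk]
        have : tauSt P (k + 1) ω = P.tauSeq (k + 1) ω := by
          unfold tauSt; split <;> omega
        omega

lemma ZnSt_zero (P : CRP Ω) (ω : Ω) : ZnSt P 0 ω = 0 := by simp [ZnSt]

lemma ZnSt_succ (P : CRP Ω) (m : ℕ) (ω : Ω) :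
    ZnSt P (m + 1) ω = ZnSt P m ω + zetaSt P (m + 1) ω :=
  Finset.sum_Icc_succ_top (by omega) _

lemma Zn_succ (P : CRP Ω) (m : ℕ) (ω : Ω) :
    Zn P (m + 1) ω = Zn P m ω + zetaSeq P (m + 1) ω :=
  Finset.sum_Icc_succ_top (by omega) _

lemma ZnSt_eq (P : CRP Ω) (m : ℕ) (hm : 1 ≤ m) (ω : Ω) :
    ZnSt P m ω = Zn P m ω + P.zetaStar ω := by
  induction m with
  | zero => omega
  | succ k ih =>
      rcases Nat.eq_zero_or_pos k with rfl | hk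
      · simp [ZnSt, Zn, zetaSt]
      · rw [ZnSt_succ, Zn_succ, ih hk]
        have : zetaSt P (k + 1) ω = zetaSeq P (k + 1) ω := by
          unfold zetaSt; split
          · omega
          · rfl
        rw [this]; ring

end Aux


section Main

variable {Ω : Type} [MeasureSpace Ω]

/-- The elementary events decomposing the left-hand side. -/
def Aset (P : CRP Ω) (n : ℕ) (x : ℤ) (p : ℕ × ℕ × ℤ) : Set Ω :=
  {ω | Tn P (p.1 + 1) ω = p.2.1 ∧ p.2.1 ≤ n ∧
    n - p.2.1 + 1 ≤ P.tauSeq (p.1 + 2) ω ∧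
    Zn P (p.1 + 1) ω = ((x - p.2.2 : ℤ) : ℝ) ∧
    P.uSeq (p.1 + 2) (n - p.2.1) ω = (p.2.2 : ℝ)}

/-- The elementary events decomposing the right-hand side. -/
def Dset (P : CRP Ω) (n : ℕ) (x : ℤ) (p : ℕ × ℕ × ℤ) : Set Ω :=
  {ω | Tn P (p.1 + 1) ω = p.2.1 ∧ p.2.1 ≤ n ∧
    P.tauStar ω = n - p.2.1 ∧
    Zn P (p.1 + 1) ω = ((x - p.2.2 : ℤ) : ℝ) ∧
    P.zetaStar ω = (p.2.2 : ℝ)}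

lemma Aset_nu (P : CRP Ω) (n : ℕ) (x : ℤ) (p : ℕ × ℕ × ℤ) {ω : Ω}
    (h : ω ∈ Aset P n x p) : nuP P n ω = p.1 + 1 := by
  obtain ⟨h1, h2, h3, -, -⟩ := h
  rw [nuP_eq_iff]
  have e : P.tauSeq (p.1 + 1 + 1) ω = P.tauSeq (p.1 + 2) ω := rfl
  constructor
  · omega
  · rw [Tn_succ, h1]; omega

lemma Dset_nuSt (P : CRP Ω) (n : ℕ) (x : ℤ) (p : ℕ × ℕ × ℤ) {ω : Ω}
    (h : ω ∈ Dset P n x p) : nuPSt P n ω = p.1 + 1 ∧ TnSt P (p.1 + 1) ω = n := by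
  obtain ⟨h1, h2, h3, -, -⟩ := h
  have hT : TnSt P (p.1 + 1) ω = n := by
    rw [TnSt_eq P _ (by omega), h1, h3]; omega
  refine ⟨?_, hT⟩
  rw [nuPSt_eq_iff]
  refine ⟨hT.le, ?_⟩
  rw [TnSt_succ, hT]
  have := tauSt_pos P (p.1 + 1 + 1) ω
  omega

lemma Aset_disj (P : CRP Ω) (n : ℕ) (x : ℤ) :
    Pairwise (Function.onFun Disjoint (Aset P n x)) := by
  intro p q hpq
  rw [Function.onFun, Set.disjoint_left]
  intro ω hp hq
  apply hpq
  have h1 : p.1 = q.1 := by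
    have := Aset_nu P n x p hp
    have := Aset_nu P n x q hq
    omega
  have h2 : p.2.1 = q.2.1 := by
    have := hp.1
    have := hq.1
    rw [← h1] at *
    omega
  have h3 : p.2.2 = q.2.2 := by
    have hu1 := hp.2.2.2.2
    have hu2 := hq.2.2.2.2
    rw [← h1, ← h2] at hu2
    exact_mod_cast hu1.symm.trans hu2
  exact Prod.ext h1 (Prod.ext h2 h3)

lemma Dset_disj (P : CRP Ω) (n : ℕ) (x : ℤ) :
    Pairwise (Function.onFun Disjoint (Dset P n x)) := by
  intro p q hpq
  rw [Function.onFun, Set.disjoint_left]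
  intro ω hp hq
  apply hpq
  have h1 : p.1 = q.1 := by
    have := (Dset_nuSt P n x p hp).1
    have := (Dset_nuSt P n x q hq).1
    omega
  have h2 : p.2.1 = q.2.1 := by
    have := hp.1
    have := hq.1
    rw [← h1] at *
    omega
  have h3 : p.2.2 = q.2.2 := by
    have hu1 := hp.2.2.2.2
    have hu2 := hq.2.2.2.2
    exact_mod_cast hu1.symm.trans hu2
  exact Prod.ext h1 (Prod.ext h2 h3)

lemma Aset_meas (P : CRP Ω) (n : ℕ) (x : ℤ) (p : ℕ × ℕ × ℤ) :
    MeasurableSet (Aset P n x p) := by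
  have : Aset P n x p = (Tn P (p.1 + 1)) ⁻¹' {p.2.1} ∩
      ({_ω : Ω | p.2.1 ≤ n} ∩
      ((P.tauSeq (p.1 + 2)) ⁻¹' (Set.Ici (n - p.2.1 + 1)) ∩
      ((Zn P (p.1 + 1)) ⁻¹' {((x - p.2.2 : ℤ) : ℝ)} ∩
      (P.uSeq (p.1 + 2) (n - p.2.1)) ⁻¹' {(p.2.2 : ℝ)}))) := by
    rfl
  rw [this]
  exact (Tn_meas P _ (measurableSet_singleton _)).inter
    ((MeasurableSet.const _).inter
    ((P.tau_meas _ measurableSet_Ici).inter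
    ((Zn_meas P _ (measurableSet_singleton _)).inter
    (P.u_meas _ _ (measurableSet_singleton _)))))

lemma Dset_meas (P : CRP Ω) (n : ℕ) (x : ℤ) (p : ℕ × ℕ × ℤ) :
    MeasurableSet (Dset P n x p) := by
  have : Dset P n x p = (Tn P (p.1 + 1)) ⁻¹' {p.2.1} ∩
      ({_ω : Ω | p.2.1 ≤ n} ∩
      ((P.tauStar) ⁻¹' {n - p.2.1} ∩
      ((Zn P (p.1 + 1)) ⁻¹' {((x - p.2.2 : ℤ) : ℝ)} ∩
      (P.zetaStar) ⁻¹' {(p.2.2 : ℝ)}))) := by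
    rfl
  rw [this]
  exact (Tn_meas P _ (measurableSet_singleton _)).inter
    ((MeasurableSet.const _).inter
    ((P.tauStar_meas (measurableSet_singleton _)).inter
    ((Zn_meas P _ (measurableSet_singleton _)).inter
    (P.zetaStar_meas (measurableSet_singleton _)))))

lemma Tn_fvec (P : CRP Ω) (m : ℕ) (ω : Ω) :
    ∑ i : (Finset.range m : Finset ℕ), (fvec P (i : ℕ) ω).1 = Tn P m ω := by
  rw [Tn_range]
  exact Finset.sum_coe_sort (Finset.range m) (fun j => (fvec P j ω).1)

lemma Zn_fvec (P : CRP Ω) (m : ℕ) (ω : Ω) :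
    ∑ i : (Finset.range m : Finset ℕ), (fvec P (i : ℕ) ω).2 ((fvec P (i : ℕ) ω).1)
      = Zn P m ω := by
  rw [Zn_range]
  exact (Finset.sum_coe_sort (Finset.range m)
      (fun j => (fvec P j ω).2 ((fvec P j ω).1))).trans
    (Finset.sum_congr rfl fun i _ => fvec_eval_self P i ω)

/-- The key one-cell identity. -/
lemma key_cell (P : CRP Ω) [IsProbabilityMeasure (ℙ : Measure Ω)]
    (n : ℕ) (x : ℤ) (p : ℕ × ℕ × ℤ) :
    ℙ (Aset P n x p) = ENNReal.ofReal (Q P) * ℙ (Dset P n x p) := by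
  classical
  obtain ⟨m, t, y⟩ := p
  by_cases ht : t ≤ n
  swap
  · have hA : Aset P n x (m, t, y) = ∅ := by
      ext ω; simp only [Aset, Set.mem_setOf_eq, Set.mem_empty_iff_false, iff_false]
      intro h; exact ht h.2.1
    have hD : Dset P n x (m, t, y) = ∅ := by
      ext ω; simp only [Dset, Set.mem_setOf_eq, Set.mem_empty_iff_false, iff_false]
      intro h; exact ht h.2.1
    simp [hA, hD]
  · set m' := m + 1 with hm'
    set γ := n - t with hγ
    set c : ℝ := ((x - y : ℤ) : ℝ) with hc
    set B : Set Ω := {ω | Tn P m' ω = t ∧ Zn P m' ω = c} with hB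
    set Cs : Set Ω := {ω | γ + 1 ≤ P.tauSeq (m' + 1) ω ∧ P.uSeq (m' + 1) γ ω = (y : ℝ)}
      with hCs
    set E : Set Ω := {ω | P.tauStar ω = γ ∧ P.zetaStar ω = (y : ℝ)} with hE
    have hAeq : Aset P n x (m, t, y) = B ∩ Cs := by
      ext ω
      simp only [Aset, hB, hCs, Set.mem_setOf_eq, Set.mem_inter_iff]
      constructor
      · rintro ⟨a1, a2, a3, a4, a5⟩; exact ⟨⟨a1, a4⟩, a3, a5⟩
      · rintro ⟨⟨a1, a4⟩, a3, a5⟩; exact ⟨a1, ht, a3, a4, a5⟩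
    have hDeq : Dset P n x (m, t, y) = B ∩ E := by
      ext ω
      simp only [Dset, hB, hE, Set.mem_setOf_eq, Set.mem_inter_iff]
      constructor
      · rintro ⟨a1, a2, a3, a4, a5⟩; exact ⟨⟨a1, a4⟩, a3, a5⟩
      · rintro ⟨⟨a1, a4⟩, a3, a5⟩; exact ⟨a1, ht, a3, a4, a5⟩
    -- preimage representations
    set SB : Set ((i : (Finset.range m' : Finset ℕ)) → ℕ × (ℕ → ℝ)) :=
      {v | (∑ i, (v i).1) = t ∧ (∑ i, (v i).2 ((v i).1)) = c} with hSB
    have hSBmeas : MeasurableSet SB := by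
      have h1 : Measurable fun v : (i : (Finset.range m' : Finset ℕ)) → ℕ × (ℕ → ℝ) =>
          ∑ i, (v i).1 :=
        Finset.measurable_sum _ fun i _ => measurable_fst.comp (measurable_pi_apply i)
      have h2 : Measurable fun v : (i : (Finset.range m' : Finset ℕ)) → ℕ × (ℕ → ℝ) =>
          ∑ i, (v i).2 ((v i).1) :=
        Finset.measurable_sum _ fun i _ => meas_eval.comp (measurable_pi_apply i)
      have : SB = (fun v : (i : (Finset.range m' : Finset ℕ)) → ℕ × (ℕ → ℝ) =>
          ∑ i, (v i).1) ⁻¹' {t} ∩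
          (fun v : (i : (Finset.range m' : Finset ℕ)) → ℕ × (ℕ → ℝ) =>
          ∑ i, (v i).2 ((v i).1)) ⁻¹' {c} := rfl
      rw [this]
      exact (h1 (measurableSet_singleton t)).inter (h2 (measurableSet_singleton c))
    have hBpre : B = (fun ω (i : (Finset.range m' : Finset ℕ)) => fvec P (i : ℕ) ω) ⁻¹' SB := by
      ext ω
      simp only [hB, hSB, Set.mem_setOf_eq, Set.mem_preimage]
      rw [Tn_fvec, Zn_fvec]
    set SB' : Set (ℕ → ℕ × (ℕ → ℝ)) :=
      {w | (∑ i ∈ Finset.range m', (w i).1) = t ∧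
        (∑ i ∈ Finset.range m', (w i).2 ((w i).1)) = c} with hSB'
    have hSB'meas : MeasurableSet SB' := by
      have h1 : Measurable fun w : ℕ → ℕ × (ℕ → ℝ) => ∑ i ∈ Finset.range m', (w i).1 :=
        Finset.measurable_sum _ fun i _ => measurable_fst.comp (measurable_pi_apply i)
      have h2 : Measurable fun w : ℕ → ℕ × (ℕ → ℝ) =>
          ∑ i ∈ Finset.range m', (w i).2 ((w i).1) :=
        Finset.measurable_sum _ fun i _ => meas_eval.comp (measurable_pi_apply i)
      have : SB' = (fun w : ℕ → ℕ × (ℕ → ℝ) => ∑ i ∈ Finset.range m', (w i).1) ⁻¹' {t} ∩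
          (fun w : ℕ → ℕ × (ℕ → ℝ) => ∑ i ∈ Finset.range m', (w i).2 ((w i).1)) ⁻¹' {c} := rfl
      rw [this]
      exact (h1 (measurableSet_singleton t)).inter (h2 (measurableSet_singleton c))
    have hB'pre : B = (fun ω (k : ℕ) => fvec P k ω) ⁻¹' SB' := by
      ext ω
      simp only [hB, hSB', Set.mem_setOf_eq, Set.mem_preimage]
      rw [show (∑ i ∈ Finset.range m', (fvec P i ω).1) = Tn P m' ω from (Tn_range P m' ω).symm,
        show (∑ i ∈ Finset.range m', (fvec P i ω).2 ((fvec P i ω).1)) = Zn P m' ω by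
          rw [Zn_range]; exact Finset.sum_congr rfl fun i _ => fvec_eval_self P i ω]
    set SC : Set (ℕ × (ℕ → ℝ)) := {q | γ + 1 ≤ q.1 ∧ q.2 γ = (y : ℝ)} with hSC
    have hSCmeas : MeasurableSet SC := by
      have : SC = Prod.fst ⁻¹' (Set.Ici (γ + 1)) ∩ (fun q : ℕ × (ℕ → ℝ) => q.2 γ) ⁻¹' {(y : ℝ)} :=
        rfl
      rw [this]
      exact (measurable_fst measurableSet_Ici).inter
        (((measurable_pi_apply γ).comp measurable_snd) (measurableSet_singleton _))
    have hCpre : Cs = fvec P m' ⁻¹' SC := by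
      ext ω
      simp only [hCs, hSC, Set.mem_setOf_eq, Set.mem_preimage, fvec]
      constructor
      · rintro ⟨h1, h2⟩
        exact ⟨h1, by rw [if_pos (by omega)]; exact h2⟩
      · rintro ⟨h1, h2⟩
        rw [if_pos (by omega)] at h2
        exact ⟨h1, h2⟩
    -- independence of B and Cs
    have hdisj : Disjoint (Finset.range m') ({m'} : Finset ℕ) := by simp
    have hInd := (indep_fvec P).indepFun_finset (Finset.range m') {m'} hdisj (fvec_meas P)
    have hSCTmeas : MeasurableSet
        ((fun w : (i : ({m'} : Finset ℕ)) → ℕ × (ℕ → ℝ) =>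
          w ⟨m', Finset.mem_singleton_self m'⟩) ⁻¹' SC) :=
      (measurable_pi_apply _) hSCmeas
    have hCpreT : Cs = (fun ω (i : ({m'} : Finset ℕ)) => fvec P (i : ℕ) ω) ⁻¹'
        ((fun w : (i : ({m'} : Finset ℕ)) → ℕ × (ℕ → ℝ) =>
          w ⟨m', Finset.mem_singleton_self m'⟩) ⁻¹' SC) := by
      rw [hCpre]; rfl
    have hmulBC : ℙ (B ∩ Cs) = ℙ B * ℙ Cs := by
      rw [hBpre, hCpreT]
      exact hInd.measure_inter_preimage_eq_mul _ _ hSBmeas hSCTmeas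
    -- identical distribution
    have hPC : ℙ Cs = ℙ {ω | γ + 1 ≤ P.tauSeq 2 ω ∧ P.uSeq 2 γ ω ∈ ({(y : ℝ)} : Set ℝ)} := by
      rw [hCpre, ← Measure.map_apply (fvec_meas P m') hSCmeas,
        ident_fvec P m' (by omega), Measure.map_apply (fvec_meas P 1) hSCmeas]
      congr 1
      ext ω
      simp only [hSC, Set.mem_preimage, Set.mem_setOf_eq, fvec, Set.mem_singleton_iff]
      constructor
      · rintro ⟨h1, h2⟩
        rw [if_pos (Nat.le_of_succ_le h1)] at h2
        exact ⟨h1, h2⟩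
      · rintro ⟨h1, h2⟩
        refine ⟨h1, ?_⟩
        rw [if_pos (Nat.le_of_succ_le h1)]
        exact h2
    have hsd := P.star_dist γ {(y : ℝ)} (measurableSet_singleton _)
    have hPCE : ℙ Cs = ENNReal.ofReal (Q P) * ℙ E := by
      rw [hPC, ← hsd]
      congr 1
    -- independence of B and E
    have hEpre : E = (fun ω => (P.tauStar ω, P.zetaStar ω)) ⁻¹'
        ({γ} ×ˢ {(y : ℝ)}) := by
      ext ω
      simp only [hE, Set.mem_setOf_eq, Set.mem_preimage, Set.mem_prod, Set.mem_singleton_iff]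
    have hmulEB : ℙ (E ∩ B) = ℙ E * ℙ B := by
      rw [hEpre, hB'pre]
      exact (star_indep_fvec P).measure_inter_preimage_eq_mul _ _
        ((measurableSet_singleton γ).prod (measurableSet_singleton _)) hSB'meas
    calc ℙ (Aset P n x (m, t, y)) = ℙ (B ∩ Cs) := by rw [hAeq]
      _ = ℙ B * ℙ Cs := hmulBC
      _ = ℙ B * (ENNReal.ofReal (Q P) * ℙ E) := by rw [hPCE]
      _ = ENNReal.ofReal (Q P) * (ℙ E * ℙ B) := by ring
      _ = ENNReal.ofReal (Q P) * ℙ (E ∩ B) := by rw [hmulEB]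
      _ = ENNReal.ofReal (Q P) * ℙ (Dset P n x (m, t, y)) := by
          rw [hDeq, Set.inter_comm]

end Main


/-- **Lemma 8 (the change-of-measure identity, arithmetic form).** Under conditions
`S_I`–`S_IV`, if moreover all the weights `u_{k,i}` are integer-valued, then for every
integer `n ≥ 2` and every integer `x ≥ 1`,
`P(Z₊(n) + u_{ν₊(n)+1, γ₊(n)} = x, τ₁ ≤ n) = Q · P(Z*₊(n) = x, γ*₊(n) = 0)`. -/
theorem change_of_measure_identity_arith {Ω : Type} [MeasureSpace Ω]
    [IsProbabilityMeasure (ℙ : Measure Ω)]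
    (P : CRP Ω) (hint : ∀ k i ω, ∃ m : ℤ, P.uSeq k i ω = (m : ℝ))
    (n : ℕ) (hn : 2 ≤ n) (x : ℤ) (hx : 1 ≤ x) :
    ℙ {ω | ZP P n ω + P.uSeq (nuP P n ω + 1) (gamP P n ω) ω = (x : ℝ) ∧
        P.tauSeq 1 ω ≤ n}
      = ENNReal.ofReal (Q P) *
        ℙ {ω | ZPSt P n ω = (x : ℝ) ∧ gamPSt P n ω = 0} := by
  classical
  have hQ1 : (1 : ℝ) ≤ Q P := by
    obtain ⟨C, hC, -, h2, -, -⟩ := P.sIII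
    have hmeas : Measurable fun ω => (P.tauSeq 2 ω : ℝ) :=
      measurable_from_nat.comp (P.tau_meas 2)
    have hint2 : Integrable (fun ω => (P.tauSeq 2 ω : ℝ)) ℙ := by
      refine ⟨hmeas.aestronglyMeasurable, ?_⟩
      rw [hasFiniteIntegral_iff_ofReal (Filter.Eventually.of_forall fun ω => by positivity)]
      have hpt : ∀ ω : Ω, ENNReal.ofReal ((P.tauSeq 2 ω : ℝ)) ≤
          ENNReal.ofReal C⁻¹ * ENNReal.ofReal (Real.exp (C * (P.tauSeq 2 ω : ℝ))) := by
        intro ω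
        rw [← ENNReal.ofReal_mul (by positivity)]
        apply ENNReal.ofReal_le_ofReal
        have h := Real.add_one_le_exp (C * (P.tauSeq 2 ω : ℝ))
        have hτ0 : (0 : ℝ) ≤ (P.tauSeq 2 ω : ℝ) := by positivity
        have h3 : C * (P.tauSeq 2 ω : ℝ) ≤ Real.exp (C * (P.tauSeq 2 ω : ℝ)) := by linarith
        calc ((P.tauSeq 2 ω : ℝ)) = C⁻¹ * (C * (P.tauSeq 2 ω : ℝ)) := by field_simp
          _ ≤ C⁻¹ * Real.exp (C * (P.tauSeq 2 ω : ℝ)) :=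
            mul_le_mul_of_nonneg_left h3 (by positivity)
      calc ∫⁻ ω, ENNReal.ofReal ((P.tauSeq 2 ω : ℝ)) ∂ℙ
          ≤ ∫⁻ ω, ENNReal.ofReal C⁻¹ *
              ENNReal.ofReal (Real.exp (C * (P.tauSeq 2 ω : ℝ))) ∂ℙ :=
            lintegral_mono hpt
        _ = ENNReal.ofReal C⁻¹ *
              ∫⁻ ω, ENNReal.ofReal (Real.exp (C * (P.tauSeq 2 ω : ℝ))) ∂ℙ :=
            lintegral_const_mul' _ _ ENNReal.ofReal_ne_top
        _ < ⊤ := ENNReal.mul_lt_top ENNReal.ofReal_lt_top h2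
    have h1le : ∀ ω : Ω, (1 : ℝ) ≤ (P.tauSeq 2 ω : ℝ) := fun ω => by
      exact_mod_cast P.tau_pos 2 ω
    calc (1 : ℝ) = ∫ _ω, (1 : ℝ) ∂(ℙ : Measure Ω) := by simp
      _ ≤ ∫ ω, (P.tauSeq 2 ω : ℝ) ∂ℙ := integral_mono (integrable_const 1) hint2 h1le
  have hQ0 : ENNReal.ofReal (Q P) ≠ 0 := by
    simp only [ne_eq, ENNReal.ofReal_eq_zero, not_le]
    linarith
  set G : Set Ω := {ω | ∃ z : ℤ, P.zetaStar ω = (z : ℝ)} with hG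
  have hGnull : ℙ Gᶜ = 0 := by
    have hsub : Gᶜ ⊆ ⋃ i : ℕ, {ω | P.tauStar ω = i ∧
        P.zetaStar ω ∈ (Set.range (fun z : ℤ => (z : ℝ)))ᶜ} := by
      intro ω hω
      simp only [hG, Set.mem_compl_iff, Set.mem_setOf_eq, not_exists] at hω
      refine Set.mem_iUnion.2 ⟨P.tauStar ω, rfl, ?_⟩
      simp only [Set.mem_compl_iff, Set.mem_range, not_exists]
      exact fun z hz => hω z hz.symm
    refine measure_mono_null hsub (measure_iUnion_null fun i => ?_)
    have hmeasR : MeasurableSet ((Set.range (fun z : ℤ => (z : ℝ)))ᶜ) :=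
      (Set.countable_range _).measurableSet.compl
    have hsd := P.star_dist i _ hmeasR
    have hzero : ℙ {ω | i + 1 ≤ P.tauSeq 2 ω ∧
        P.uSeq 2 i ω ∈ (Set.range (fun z : ℤ => (z : ℝ)))ᶜ} = 0 := by
      have hempty : {ω : Ω | i + 1 ≤ P.tauSeq 2 ω ∧
          P.uSeq 2 i ω ∈ (Set.range (fun z : ℤ => (z : ℝ)))ᶜ} = (∅ : Set Ω) := by
        ext ω
        simp only [Set.mem_setOf_eq, Set.mem_compl_iff, Set.mem_range,
          Set.mem_empty_iff_false, iff_false, not_and, not_not]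
        intro _
        obtain ⟨z, hz⟩ := hint 2 i ω
        exact ⟨z, hz.symm⟩
      rw [hempty]
      exact measure_empty
    rw [hzero] at hsd
    exact (mul_eq_zero.1 hsd).resolve_left hQ0
  have hLHS : {ω | ZP P n ω + P.uSeq (nuP P n ω + 1) (gamP P n ω) ω = (x : ℝ) ∧
      P.tauSeq 1 ω ≤ n} = ⋃ p : ℕ × ℕ × ℤ, Aset P n x p := by
    ext ω
    simp only [Set.mem_setOf_eq, Set.mem_iUnion]
    constructor
    · rintro ⟨hsum, hτ1⟩
      have hchar := (nuP_eq_iff P n (nuP P n ω) ω).1 rfl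
      have hm1 : 1 ≤ nuP P n ω := by
        have hT1 : Tn P 1 ω ≤ n := by
          have e1 : Tn P 1 ω = P.tauSeq 1 ω := by simp [Tn]
          omega
        exact Nat.le_findGreatest (by omega) hT1
      obtain ⟨k, hk⟩ : ∃ k, nuP P n ω = k + 1 := ⟨nuP P n ω - 1, by omega⟩
      obtain ⟨y, hy⟩ := hint (nuP P n ω + 1) (gamP P n ω) ω
      rw [hk] at hchar
      have hgam : gamP P n ω = n - Tn P (k + 1) ω := by rw [gamP, hk]
      have hZP : ZP P n ω = Zn P (k + 1) ω := by rw [ZP, hk]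
      rw [hk, hgam] at hy
      rw [hZP, hk, hgam] at hsum
      refine ⟨(k, Tn P (k + 1) ω, y), ?_⟩
      simp only [Aset, Set.mem_setOf_eq]
      refine ⟨trivial, hchar.1, ?_, ?_, hy⟩
      · have h2 := hchar.2
        rw [Tn_succ] at h2
        have e : P.tauSeq (k + 1 + 1) ω = P.tauSeq (k + 2) ω := rfl
        have h1 := hchar.1
        omega
      · push_cast
        linarith [hsum, hy]
    · rintro ⟨⟨k, t, y⟩, hp⟩
      have hnu : nuP P n ω = k + 1 := Aset_nu P n x (k, t, y) hp
      simp only [Aset, Set.mem_setOf_eq] at hp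
      obtain ⟨h1, h2, h3, h4, h5⟩ := hp
      constructor
      · have hZP : ZP P n ω = Zn P (k + 1) ω := by rw [ZP, hnu]
        have hgam : gamP P n ω = n - t := by rw [gamP, hnu, h1]
        have h5' : P.uSeq (k + 1 + 1) (n - t) ω = (y : ℝ) := h5
        rw [hZP, hnu, hgam, h4, h5']
        push_cast; ring
      · have hs := Finset.single_le_sum (f := fun i => P.tauSeq (i + 1) ω)
          (fun i _ => Nat.zero_le _) (Finset.mem_range.2 (Nat.succ_pos k))
        rw [← Tn_range] at hs
        have hs' : P.tauSeq 1 ω ≤ Tn P (k + 1) ω := hs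
        omega
  have hRHS : {ω | ZPSt P n ω = (x : ℝ) ∧ gamPSt P n ω = 0} ∩ G
      = ⋃ p : ℕ × ℕ × ℤ, Dset P n x p := by
    ext ω
    simp only [Set.mem_inter_iff, Set.mem_setOf_eq, Set.mem_iUnion, hG]
    constructor
    · rintro ⟨⟨hZ, hγ⟩, z, hz⟩
      have hchar := (nuPSt_eq_iff P n (nuPSt P n ω) ω).1 rfl
      have hTeq : TnSt P (nuPSt P n ω) ω = n := by
        have hgam' : gamPSt P n ω = n - TnSt P (nuPSt P n ω) ω := rfl
        have := hchar.1
        omega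
      have hm1 : 1 ≤ nuPSt P n ω := by
        by_contra h
        have h0 : nuPSt P n ω = 0 := by omega
        rw [h0, TnSt_zero] at hTeq
        omega
      obtain ⟨k, hk⟩ : ∃ k, nuPSt P n ω = k + 1 := ⟨nuPSt P n ω - 1, by omega⟩
      rw [hk] at hTeq
      have hTsum : Tn P (k + 1) ω + P.tauStar ω = n := by
        rw [← TnSt_eq P (k + 1) (by omega) ω]; exact hTeq
      have hZn : ZnSt P (k + 1) ω = (x : ℝ) := by rw [← hk]; exact hZ
      have hZn' : Zn P (k + 1) ω + P.zetaStar ω = (x : ℝ) := by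
        rw [← ZnSt_eq P (k + 1) (by omega) ω]; exact hZn
      refine ⟨(k, Tn P (k + 1) ω, z), ?_⟩
      simp only [Dset, Set.mem_setOf_eq]
      refine ⟨trivial, by omega, by omega, ?_, hz⟩
      rw [hz] at hZn'
      push_cast
      linarith
    · rintro ⟨⟨k, t, y⟩, hp⟩
      obtain ⟨hnu, hT⟩ := Dset_nuSt P n x (k, t, y) hp
      simp only [Dset, Set.mem_setOf_eq] at hp
      obtain ⟨h1, h2, h3, h4, h5⟩ := hp
      refine ⟨⟨?_, ?_⟩, y, h5⟩
      · have hZPSt : ZPSt P n ω = ZnSt P (k + 1) ω := by rw [ZPSt, hnu]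
        rw [hZPSt, ZnSt_eq P (k + 1) (by omega) ω, h4, h5]
        push_cast; ring
      · rw [gamPSt, hnu, hT]
        omega
  rw [hLHS, measure_iUnion (Aset_disj P n x) (Aset_meas P n x)]
  calc ∑' p : ℕ × ℕ × ℤ, ℙ (Aset P n x p)
      = ∑' p : ℕ × ℕ × ℤ, ENNReal.ofReal (Q P) * ℙ (Dset P n x p) :=
        tsum_congr fun p => key_cell P n x p
    _ = ENNReal.ofReal (Q P) * ∑' p : ℕ × ℕ × ℤ, ℙ (Dset P n x p) := ENNReal.tsum_mul_left
    _ = ENNReal.ofReal (Q P) * ℙ (⋃ p : ℕ × ℕ × ℤ, Dset P n x p) := by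
        rw [measure_iUnion (Dset_disj P n x) (Dset_meas P n x)]
    _ = ENNReal.ofReal (Q P) *
          ℙ ({ω | ZPSt P n ω = (x : ℝ) ∧ gamPSt P n ω = 0} ∩ G) := by
        rw [hRHS]
    _ = ENNReal.ofReal (Q P) * ℙ {ω | ZPSt P n ω = (x : ℝ) ∧ gamPSt P n ω = 0} := by
        rw [measure_inter_conull hGnull]


end CompoundRenewal
end
end

section
/- Almost surely, for all integers j < k one has the pathwise bound w_{j,k} ≤ (k − j) + Σ_{j ≤ x < y ≤ k} max(v_{x,y} − (y − x), 0); consequently, w_{0,Γ₀} ≤ Γ₀ + Σ_{x=0}^{Γ₀−1} Z_x, where Z_x := sup_{y > x} max(v_{x,y} − (y − x), 0) and the random variables {Z_x}_{x∈ℤ} are independent and identically distributed. -/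
open MeasureTheory ProbabilityTheory Filter Real Set
open scoped ENNReal Topology

noncomputable section

namespace MaxPathWeight

def IsPath (j k : ℤ) (p : List ℤ) : Prop :=
  p.Chain' (· < ·) ∧ p.head? = some j ∧ p.getLast? = some k

def edges (p : List ℤ) : List (ℤ × ℤ) := p.zip p.tail

structure EdgeData (Ω : Type) [MeasureSpace Ω] where
  v : ℤ → ℤ → Ω → EReal
  v_meas : ∀ j k, Measurable (v j k)
  v_ne_top : ∀ j k ω, v j k ω ≠ ⊤
  v_indep : iIndepFun
    (fun e : {e : ℤ × ℤ // e.1 < e.2} => v e.1.1 e.1.2) ℙ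
  v_ident : ∀ j k : ℤ, j < k → Measure.map (v j k) ℙ = Measure.map (v 0 1) ℙ
  vp : ℤ → ℤ → Ω → ℝ
  vp_meas : ∀ j k, Measurable (vp j k)
  vp_pos : ∀ j k ω, 0 < vp j k ω
  vp_couple : ∀ j k ω, 0 < v j k ω → (vp j k ω : EReal) = v j k ω
  vp_indep : iIndepFun
    (fun e : {e : ℤ × ℤ // e.1 < e.2} => vp e.1.1 e.1.2) ℙ
  vp_dist : ∀ j k : ℤ, j < k → ∀ s : Set ℝ, MeasurableSet s →
    ℙ {ω | vp j k ω ∈ s} * ℙ {ω | 0 < v 0 1 ω}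
      = ℙ {ω | 0 < v 0 1 ω ∧ (v 0 1 ω).toReal ∈ s}
  pos_prob : 0 < ℙ {ω | 0 < v 0 1 ω}
  nondeg : ∀ c : ℝ, 0 < c → ℙ {ω | vp 0 1 ω = c} < 1
  exp_moment : ∃ C : ℝ, 0 < C ∧
    ∫⁻ ω, ENNReal.ofReal (Real.exp (C * vp 0 1 ω)) ∂ℙ < ⊤

variable {Ω : Type} [MeasureSpace Ω]

def pathWeight (M : EdgeData Ω) (p : List ℤ) (ω : Ω) : EReal :=
  ((edges p).map fun e => M.v e.1 e.2 ω).sum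

def posOnPath (M : EdgeData Ω) (p : List ℤ) (ω : Ω) : Prop :=
  ∀ e ∈ edges p, 0 < M.v e.1 e.2 ω

def w (M : EdgeData Ω) (j k : ℤ) (ω : Ω) : EReal :=
  if j = k then 0 else sSup {x | ∃ p, IsPath j k p ∧ pathWeight M p ω = x}

def wp (M : EdgeData Ω) (j k : ℤ) (ω : Ω) : EReal :=
  sSup {x | ∃ p, IsPath j k p ∧ posOnPath M p ω ∧ pathWeight M p ω = x}

def IsSkeletonPlus (M : EdgeData Ω) (x : ℤ) (ω : Ω) : Prop :=
  ∀ j k : ℤ, j < x → x < k →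
    (∃ p, IsPath j x p ∧ posOnPath M p ω) ∧ (∃ p, IsPath x k p ∧ posOnPath M p ω)

def Ar (M : EdgeData Ω) (c : ℝ) (x : ℤ) (ω : Ω) : Prop :=
  ∀ i : ℕ, 1 ≤ i → ((c * i : ℝ) : EReal) ≤ w M x (x + i) ω

def Al (M : EdgeData Ω) (c : ℝ) (x : ℤ) (ω : Ω) : Prop :=
  ∀ j : ℕ, 1 ≤ j → ((c * j : ℝ) : EReal) ≤ w M (x - j) x ω

def A0 (M : EdgeData Ω) (c : ℝ) (x : ℤ) (ω : Ω) : Prop :=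
  ∀ i j : ℕ, 1 ≤ i → 1 ≤ j → M.v (x - j) (x + i) ω < ((c * (i + j) : ℝ) : EReal)

def ArP (M : EdgeData Ω) (c : ℝ) (x : ℤ) (ω : Ω) : Prop :=
  ∀ i : ℕ, 1 ≤ i → ((c * i : ℝ) : EReal) ≤ wp M x (x + i) ω

def AlP (M : EdgeData Ω) (c : ℝ) (x : ℤ) (ω : Ω) : Prop :=
  ∀ j : ℕ, 1 ≤ j → ((c * j : ℝ) : EReal) ≤ wp M (x - j) x ω

def IsRenewal (M : EdgeData Ω) (c₁ c₂ : ℝ) (x : ℤ) (ω : Ω) : Prop :=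
  Al M c₁ x ω ∧ A0 M c₂ x ω ∧ Ar M c₁ x ω

def IsRenewalPlus (M : EdgeData Ω) (c₁ c₂ : ℝ) (x : ℤ) (ω : Ω) : Prop :=
  AlP M c₁ x ω ∧ A0 M c₂ x ω ∧ ArP M c₁ x ω

/-- The edge model together with a measurable enumeration `tp` of the (a.s. infinite) set of
skeleton-plus vertices: `⋯ < t⁺₋₁ < 0 ≤ t⁺₀ < t⁺₁ < ⋯`. -/
structure EdgeModel (Ω : Type) [MeasureSpace Ω] extends EdgeData Ω where
  tp : ℤ → Ω → ℤ
  tp_meas : ∀ k, Measurable (tp k)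
  tp_spec : ∀ᵐ ω ∂ℙ, StrictMono (fun k => tp k ω) ∧ tp (-1) ω < 0 ∧ 0 ≤ tp 0 ω ∧
    (∀ k : ℤ, IsSkeletonPlus toEdgeData (tp k ω) ω) ∧
    (∀ x : ℤ, IsSkeletonPlus toEdgeData x ω → ∃ k, tp k ω = x)

/-- `γ⁺ = 1 / E (t⁺₁ - t⁺₀)`. -/
def gammaP (M : EdgeModel Ω) : ℝ := (∫ ω, ((M.tp 1 ω - M.tp 0 ω : ℤ) : ℝ) ∂ℙ)⁻¹

/-- `V = E min { v⁺_{i j} : t⁺₀ ≤ i < j ≤ t⁺₁ }`. -/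
def Vconst (M : EdgeModel Ω) : ℝ :=
  ∫ ω, sInf {r : ℝ | ∃ i j : ℤ, M.tp 0 ω ≤ i ∧ i < j ∧ j ≤ M.tp 1 ω ∧ M.vp i j ω = r} ∂ℙ

/-- `ess inf v⁺ = inf {t > 0 : P(v⁺ < t) > 0}`. -/
def essInfVP (M : EdgeModel Ω) : ℝ :=
  sInf {t : ℝ | 0 < t ∧ 0 < ℙ {ω | M.vp 0 1 ω < t}}

/-- Admissibility of the constants `c₁ ≥ c₂ > 0`:
`γ⁺ · ess inf v⁺ < c₂ ≤ c₁ < γ⁺ · V`. -/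
def Admissible (M : EdgeModel Ω) (c₁ c₂ : ℝ) : Prop :=
  0 < c₂ ∧ c₂ ≤ c₁ ∧ gammaP M * essInfVP M < c₂ ∧ c₁ < gammaP M * Vconst M

/-- The full renewal setting: the edge model, admissible constants `c₁ ≥ c₂ > 0`, and
measurable enumerations `Γ` of the renewal vertices and `Γp` of the renewal-plus vertices. -/
structure RenewalSetting (Ω : Type) [MeasureSpace Ω] extends EdgeModel Ω where
  c₁ : ℝ
  c₂ : ℝ
  adm : Admissible toEdgeModel c₁ c₂
  Γ : ℤ → Ω → ℤ
  Γ_meas : ∀ k, Measurable (Γ k)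
  Γ_spec : ∀ᵐ ω ∂ℙ, StrictMono (fun k => Γ k ω) ∧ Γ (-1) ω < 0 ∧ 0 ≤ Γ 0 ω ∧
    (∀ k : ℤ, IsRenewal toEdgeData c₁ c₂ (Γ k ω) ω) ∧
    (∀ x : ℤ, IsRenewal toEdgeData c₁ c₂ x ω → ∃ k, Γ k ω = x)
  Γp : ℤ → Ω → ℤ
  Γp_meas : ∀ k, Measurable (Γp k)
  Γp_spec : ∀ᵐ ω ∂ℙ, StrictMono (fun k => Γp k ω) ∧ Γp (-1) ω < 0 ∧ 0 ≤ Γp 0 ω ∧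
    (∀ k : ℤ, IsRenewalPlus toEdgeData c₁ c₂ (Γp k ω) ω) ∧
    (∀ x : ℤ, IsRenewalPlus toEdgeData c₁ c₂ x ω → ∃ k, Γp k ω = x)

/-- `τ = Γ₁ - Γ₀`, a representative of the common cycle-length distribution. -/
def tau (S : RenewalSetting Ω) (ω : Ω) : ℤ := S.Γ 1 ω - S.Γ 0 ω

/-- `ζ = w_{Γ₀, Γ₁}`, a representative of the common cycle-weight distribution. -/
def zeta (S : RenewalSetting Ω) (ω : Ω) : ℝ :=
  (w S.toEdgeData (S.Γ 0 ω) (S.Γ 1 ω) ω).toReal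

/-- `A(λ, μ) = ln E exp (λ τ + μ ζ)`. -/
def Afun (S : RenewalSetting Ω) (l m : ℝ) : ℝ :=
  Real.log (∫ ω, Real.exp (l * (tau S ω : ℝ) + m * zeta S ω) ∂ℙ)

/-- The rate function `D(α) = sup {λ + μ α : A(λ, μ) ≤ 0}`. -/
def Dfun (S : RenewalSetting Ω) (α : ℝ) : ℝ :=
  sSup {x : ℝ | ∃ l m : ℝ, Afun S l m ≤ 0 ∧ x = l + m * α}

/-- `a = E ζ / E τ`. -/
def aC (S : RenewalSetting Ω) : ℝ :=
  (∫ ω, zeta S ω ∂ℙ) / (∫ ω, (tau S ω : ℝ) ∂ℙ)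

/-- `σ² = E (ζ - a τ)² / E τ`. -/
def sigmaSq (S : RenewalSetting Ω) : ℝ :=
  (∫ ω, (zeta S ω - aC S * (tau S ω : ℝ)) ^ 2 ∂ℙ) / (∫ ω, (tau S ω : ℝ) ∂ℙ)

/-- `σ`. -/
def sigmaC (S : RenewalSetting Ω) : ℝ := Real.sqrt (sigmaSq S)

/-- Condition `[Z]` : `v` is integer-valued, and the gcd of `{k ≥ 1 : P(v = k) > 0}` is `1`. -/
def CondZ (M : EdgeData Ω) : Prop :=
  ℙ {ω | M.v 0 1 ω = ⊥ ∨ ∃ m : ℤ, M.v 0 1 ω = ((m : ℝ) : EReal)} = 1 ∧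
  ∀ d : ℕ, (∀ k : ℕ, 1 ≤ k → 0 < ℙ {ω | M.v 0 1 ω = ((k : ℝ) : EReal)} → d ∣ k) → d = 1

/-- Condition `[R]` : the distribution of `v` is non-lattice. -/
def CondR (M : EdgeData Ω) : Prop :=
  ∀ a h : ℝ, 0 < h → (∑' s : ℤ, ℙ {ω | M.v 0 1 ω = ((a + s * h : ℝ) : EReal)}) < 1


/-- `Z_x = sup_{y > x} max (v_{x,y} - (y - x), 0)`. -/
def Zx (M : EdgeData Ω) (x : ℤ) (ω : Ω) : EReal :=
  ⨆ y : {y : ℤ // x < y}, max (M.v x y.1 ω - (((y.1 - x : ℤ) : ℝ) : EReal)) 0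
section Aux

lemma edge_le (c : ℝ) (a : EReal) (ha : a ≠ ⊤) : a ≤ (c : EReal) + max (a - (c:EReal)) 0 := by
  by_cases hb : a = ⊥
  · simp [hb]
  · lift a to ℝ using ⟨ha, hb⟩
    calc (a : EReal) = (c : EReal) + ((a - c : ℝ) : EReal) := by
          rw [← EReal.coe_add]; norm_num
      _ ≤ (c : EReal) + max (↑a - ↑c) 0 := by
          gcongr
          exact le_max_of_le_left (by rw [EReal.coe_sub])

lemma edges_cons_cons (a b : ℤ) (t : List ℤ) :
    edges (a :: b :: t) = (a, b) :: edges (b :: t) := rfl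

lemma chain'_le_getLast : ∀ (p : List ℤ) (k : ℤ), p.Chain' (· < ·) →
    p.getLast? = some k → ∀ x ∈ p, x ≤ k
  | [], k, _, h, x, hx => by simp at hx
  | [a], k, _, h, x, hx => by
      simp at h hx; omega
  | a :: b :: t, k, hc, h, x, hx => by
      rw [List.getLast?_cons_cons] at h
      simp only [List.Chain', List.isChain_cons_cons] at hc
      have ih := chain'_le_getLast (b :: t) k hc.2 h
      rcases List.mem_cons.mp hx with rfl | hx
      · exact le_trans hc.1.le (ih b List.mem_cons_self)
      · exact ih x hx

lemma chain'_head_le (p : List ℤ) (a : ℤ) (hc : p.Chain' (· < ·))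
    (h : p.head? = some a) : ∀ x ∈ p, a ≤ x := by
  match p, h with
  | b :: t, h =>
    simp only [List.head?_cons, Option.some_inj] at h
    subst h
    intro x hx
    rcases List.mem_cons.mp hx with rfl | hx
    · exact le_rfl
    · exact (List.rel_of_pairwise_cons (List.isChain_iff_pairwise.mp hc) hx).le

lemma edges_mem : ∀ (p : List ℤ), p.Chain' (· < ·) →
    ∀ e ∈ edges p, e.1 < e.2 ∧ e.1 ∈ p ∧ e.2 ∈ p
  | [], _, e, he => by simp [edges] at he
  | [a], _, e, he => by simp [edges] at he
  | a :: b :: t, hc, e, he => by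
      simp only [List.Chain', List.isChain_cons_cons] at hc
      rw [edges_cons_cons, List.mem_cons] at he
      rcases he with rfl | he
      · exact ⟨hc.1, by simp, by simp⟩
      · obtain ⟨h1, h2, h3⟩ := edges_mem (b :: t) hc.2 e he
        exact ⟨h1, List.mem_cons_of_mem _ h2, List.mem_cons_of_mem _ h3⟩

lemma edges_map_fst : ∀ (p : List ℤ), (edges p).map Prod.fst = p.dropLast
  | [] => rfl
  | [a] => rfl
  | a :: b :: t => by
      rw [edges_cons_cons, List.map_cons, edges_map_fst (b :: t)]
      rfl

lemma edges_nodup (p : List ℤ) (hc : p.Chain' (· < ·)) : (edges p).Nodup := by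
  have h1 : p.Nodup := (List.isChain_iff_pairwise.mp hc).imp ne_of_lt
  have h2 : (p.dropLast).Nodup := h1.sublist (List.dropLast_sublist p)
  rw [← edges_map_fst] at h2
  exact h2.of_map _

variable {Ω : Type} [MeasureSpace Ω]

lemma pathWeight_le (M : EdgeData Ω) (ω : Ω) :
    ∀ (p : List ℤ) (a k : ℤ), p.Chain' (· < ·) → p.head? = some a → p.getLast? = some k →
    pathWeight M p ω ≤ (((k - a : ℤ) : ℝ) : EReal)
      + ((edges p).map fun e => max (M.v e.1 e.2 ω - (((e.2 - e.1 : ℤ):ℝ):EReal)) 0).sum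
  | [], a, k, _, h, _ => by simp at h
  | [x], a, k, _, ha, hk => by
      simp at ha hk
      subst ha; subst hk
      simp [pathWeight, edges]
  | x :: y :: t, a, k, hc, ha, hk => by
      simp only [List.head?_cons, Option.some_inj] at ha
      subst ha
      rw [List.getLast?_cons_cons] at hk
      simp only [List.Chain', List.isChain_cons_cons] at hc
      have IH := pathWeight_le M ω (y :: t) y k hc.2 rfl hk
      have hsplit : pathWeight M (x :: y :: t) ω
          = M.v x y ω + pathWeight M (y :: t) ω := by
        simp [pathWeight, edges_cons_cons]
      rw [hsplit, edges_cons_cons, List.map_cons, List.sum_cons]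
      calc M.v x y ω + pathWeight M (y :: t) ω
          ≤ M.v x y ω + ((((k - y : ℤ) : ℝ) : EReal)
              + ((edges (y :: t)).map fun e =>
                  max (M.v e.1 e.2 ω - (((e.2 - e.1 : ℤ):ℝ):EReal)) 0).sum) :=
            add_le_add_right IH _
        _ ≤ ((((y - x : ℤ) : ℝ) : EReal)
              + max (M.v x y ω - (((y - x : ℤ):ℝ):EReal)) 0)
            + ((((k - y : ℤ) : ℝ) : EReal)
              + ((edges (y :: t)).map fun e =>
                  max (M.v e.1 e.2 ω - (((e.2 - e.1 : ℤ):ℝ):EReal)) 0).sum) :=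
            add_le_add (edge_le _ _ (M.v_ne_top x y ω)) le_rfl
        _ = (((k - x : ℤ) : ℝ) : EReal)
            + (max (M.v x y ω - (((y - x : ℤ):ℝ):EReal)) 0
              + ((edges (y :: t)).map fun e =>
                  max (M.v e.1 e.2 ω - (((e.2 - e.1 : ℤ):ℝ):EReal)) 0).sum) := by
            rw [show (((k - x : ℤ) : ℝ) : EReal)
               = (((y - x : ℤ) : ℝ) : EReal) + (((k - y : ℤ) : ℝ) : EReal) by
              rw [← EReal.coe_add]; norm_cast; omega]
            abel

end Aux

section Det
variable {Ω : Type} [MeasureSpace Ω]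

lemma w_le_bound (M : EdgeData Ω) (ω : Ω) (j k : ℤ) (hjk : j < k) :
    w M j k ω ≤ (((k - j : ℤ) : ℝ) : EReal)
      + ∑ p ∈ (Finset.Icc j k ×ˢ Finset.Icc j k).filter (fun p => p.1 < p.2),
          max (M.v p.1 p.2 ω - (((p.2 - p.1 : ℤ) : ℝ) : EReal)) 0 := by
  rw [w, if_neg hjk.ne]
  refine sSup_le ?_
  rintro x ⟨p, ⟨hc, hh, hl⟩, rfl⟩
  refine (pathWeight_le M ω p j k hc hh hl).trans ?_
  have hnd := edges_nodup p hc
  rw [← List.sum_toFinset _ hnd]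
  refine add_le_add le_rfl (Finset.sum_le_sum_of_subset_of_nonneg ?_ ?_)
  · intro e he
    rw [List.mem_toFinset] at he
    obtain ⟨h1, h2, h3⟩ := edges_mem p hc e he
    rw [Finset.mem_filter, Finset.mem_product, Finset.mem_Icc, Finset.mem_Icc]
    exact ⟨⟨⟨chain'_head_le p j hc hh _ h2, chain'_le_getLast p k hc hl _ h2⟩,
      ⟨chain'_head_le p j hc hh _ h3, chain'_le_getLast p k hc hl _ h3⟩⟩, h1⟩
  · exact fun e _ _ => le_max_right _ 0

lemma Zx_nonneg (M : EdgeData Ω) (x : ℤ) (ω : Ω) : 0 ≤ Zx M x ω :=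
  le_iSup_of_le ⟨x + 1, lt_add_one x⟩ (le_max_right _ 0)

lemma w_le_Zx (M : EdgeData Ω) (ω : Ω) (g : ℕ) :
    w M 0 (g : ℤ) ω ≤ ((g : ℝ) : EReal) + ∑ i ∈ Finset.range g, Zx M (i : ℤ) ω := by
  rcases Nat.eq_zero_or_pos g with rfl | hg
  · simp [w]
  · rw [w, if_neg (by exact_mod_cast hg.ne)]
    refine sSup_le ?_
    rintro x ⟨p, ⟨hc, hh, hl⟩, rfl⟩
    refine (pathWeight_le M ω p 0 g hc hh hl).trans ?_
    have hcoe : ((((g : ℤ) - 0 : ℤ) : ℝ) : EReal) = ((g : ℝ) : EReal) := by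
      push_cast; norm_num
    rw [hcoe]
    refine add_le_add le_rfl ?_
    have hnd := edges_nodup p hc
    rw [← List.sum_toFinset _ hnd]
    have hfst : ((edges p).map Prod.fst).Nodup := by
      rw [edges_map_fst]
      exact ((List.isChain_iff_pairwise.mp hc).imp ne_of_lt).sublist (List.dropLast_sublist p)
    have hinj := List.inj_on_of_nodup_map hfst
    calc ∑ e ∈ (edges p).toFinset, max (M.v e.1 e.2 ω - (((e.2 - e.1 : ℤ):ℝ):EReal)) 0
        ≤ ∑ e ∈ (edges p).toFinset, Zx M e.1 ω := by
          refine Finset.sum_le_sum fun e he => ?_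
          have hlt := (edges_mem p hc e (List.mem_toFinset.mp he)).1
          exact le_iSup_of_le (⟨e.2, hlt⟩ : {y : ℤ // e.1 < y}) le_rfl
      _ = ∑ x ∈ (edges p).toFinset.image Prod.fst, Zx M x ω := by
          rw [Finset.sum_image]
          intro a ha b hb hab
          exact hinj (List.mem_toFinset.mp ha) (List.mem_toFinset.mp hb) hab
      _ ≤ ∑ x ∈ (Finset.range g).image (Nat.cast : ℕ → ℤ), Zx M x ω := by
          refine Finset.sum_le_sum_of_subset_of_nonneg ?_
            (fun x _ _ => Zx_nonneg M x ω)
          intro x hx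
          rw [Finset.mem_image] at hx ⊢
          obtain ⟨e, he, rfl⟩ := hx
          obtain ⟨h1, h2, h3⟩ := edges_mem p hc e (List.mem_toFinset.mp he)
          have hx0 : 0 ≤ e.1 := chain'_head_le p 0 hc hh _ h2
          have hxk : e.2 ≤ (g : ℤ) := chain'_le_getLast p g hc hl _ h3
          exact ⟨e.1.toNat, Finset.mem_range.mpr (by omega), by omega⟩
      _ = ∑ i ∈ Finset.range g, Zx M (i : ℤ) ω := by
          rw [Finset.sum_image (fun a _ b _ h => Nat.cast_injective h)]

end Det
section Indep
variable {Ω' ι κ β : Type*} {mΩ : MeasurableSpace Ω'} {μ : Measure Ω'}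
  [mβ : MeasurableSpace β]

lemma iIndep_grouping [IsProbabilityMeasure μ] {f : ι → Ω' → β}
    (hf_meas : ∀ i, Measurable (f i))
    (hf : iIndepFun f μ)
    (T : κ → Set ι) (hT : Pairwise (Function.onFun Disjoint T)) :
    iIndep (fun k => ⨆ i ∈ T k, mβ.comap (f i)) μ := by
  classical
  set m : ι → MeasurableSpace Ω' := fun i => mβ.comap (f i) with hm
  have h_le : ∀ i, m i ≤ mΩ := fun i => (hf_meas i).comap_le
  refine iIndepSets.iIndep (fun k => iSup₂_le fun i _ => h_le i)
    (fun k => piiUnionInter (fun i => {s | MeasurableSet[m i] s}) (T k))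
    (fun k => isPiSystem_piiUnionInter _
      (fun i => @MeasurableSpace.isPiSystem_measurableSet Ω' (m i)) _)
    (fun k => (generateFrom_piiUnionInter_measurableSet m (T k)).symm) ?_
  rw [iIndepSets_iff]
  intro K A hA
  have hrep : ∀ k : κ, ∃ (S : Finset ι) (g : ι → Set Ω'),
      k ∈ K → (↑S ⊆ T k ∧ (∀ i ∈ S, MeasurableSet[m i] (g i)) ∧ A k = ⋂ i ∈ S, g i) := by
    intro k
    by_cases hk : k ∈ K
    · obtain ⟨S, hS, g, hg, hAk⟩ := hA k hk
      exact ⟨S, g, fun _ => ⟨hS, hg, hAk⟩⟩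
    · exact ⟨∅, fun _ => Set.univ, fun h => absurd h hk⟩
  choose S g hSg using hrep
  have hS_sub : ∀ k ∈ K, ↑(S k) ⊆ T k := fun k hk => (hSg k hk).1
  have hg_meas : ∀ k ∈ K, ∀ i ∈ S k, MeasurableSet[m i] (g k i) := fun k hk => (hSg k hk).2.1
  have hA_eq : ∀ k ∈ K, A k = ⋂ i ∈ S k, g k i := fun k hk => (hSg k hk).2.2
  have huniq : ∀ k ∈ K, ∀ k' ∈ K, ∀ i, i ∈ S k → i ∈ S k' → k = k' := by
    intro k hk k' hk' i hi hi'
    by_contra hne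
    exact Set.disjoint_left.mp (hT hne) (hS_sub k hk hi) (hS_sub k' hk' hi')
  set s : ι → Set Ω' := fun i => ⋂ k ∈ K.filter (fun k => i ∈ S k), g k i with hs
  have hfilter : ∀ k ∈ K, ∀ i ∈ S k, K.filter (fun k' => i ∈ S k') = {k} := by
    intro k hk i hi
    ext k'
    simp only [Finset.mem_filter, Finset.mem_singleton]
    constructor
    · rintro ⟨hk', hi'⟩; exact huniq k' hk' k hk i hi' hi
    · rintro rfl; exact ⟨hk, hi⟩
  have hs_eq : ∀ k ∈ K, ∀ i ∈ S k, s i = g k i := by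
    intro k hk i hi
    rw [hs]
    simp only
    rw [hfilter k hk i hi]
    simp
  set U : Finset ι := K.biUnion S with hU
  have hs_meas : ∀ i, i ∈ U → MeasurableSet[mβ.comap (f i)] (s i) := by
    intro i hi
    obtain ⟨k, hk, hik⟩ := Finset.mem_biUnion.mp hi
    rw [hs_eq k hk i hik]
    exact hg_meas k hk i hik
  have hInter : ⋂ k ∈ K, A k = ⋂ i ∈ U, s i := by
    ext ω
    rw [Set.mem_iInter₂, Set.mem_iInter₂]
    constructor
    · intro h i hi
      obtain ⟨k, hk, hik⟩ := Finset.mem_biUnion.mp hi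
      rw [hs_eq k hk i hik]
      have := h k hk
      rw [hA_eq k hk, Set.mem_iInter₂] at this
      exact this i hik
    · intro h k hk
      rw [hA_eq k hk, Set.mem_iInter₂]
      intro i hi
      have := h i (Finset.mem_biUnion.mpr ⟨k, hk, hi⟩)
      rwa [hs_eq k hk i hi] at this
  have hdisj : (K : Set κ).PairwiseDisjoint S := by
    intro k hk k' hk' hne
    exact Finset.disjoint_left.mpr fun i hi hi' => hne (huniq k hk k' hk' i hi hi')
  calc μ (⋂ k ∈ K, A k) = μ (⋂ i ∈ U, s i) := by rw [hInter]
    _ = ∏ i ∈ U, μ (s i) := hf.meas_biInter hs_meas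
    _ = ∏ k ∈ K, ∏ i ∈ S k, μ (s i) := Finset.prod_biUnion hdisj
    _ = ∏ k ∈ K, μ (A k) := by
        refine Finset.prod_congr rfl fun k hk => ?_
        rw [hA_eq k hk, hf.meas_biInter (fun i hi => hg_meas k hk i hi)]
        exact Finset.prod_congr rfl fun i hi => by rw [hs_eq k hk i hi]

lemma iIndep_mono {m m' : κ → MeasurableSpace Ω'} (hle : ∀ k, m k ≤ m' k)
    (h : iIndep m' μ) : iIndep m μ := by
  rw [iIndep_iff] at h ⊢
  intro K sets hsets
  exact h K fun i hi => hle i _ (hsets i hi)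

end Indep

section ZxMeas
variable {Ω : Type} [MeasureSpace Ω]

lemma gmax_mono (c : EReal) : Monotone (fun a : EReal => max (a - c) 0) :=
  fun _u _v huv => max_le_max (EReal.sub_le_sub huv le_rfl) le_rfl

lemma gmax_measurable (c : EReal) : Measurable (fun a : EReal => max (a - c) 0) :=
  (gmax_mono c).measurable

lemma measurable_iSup' {δ : Type*} {mδ : MeasurableSpace δ} {ι : Type*} [Countable ι]
    {f : ι → δ → EReal} (hf : ∀ i, Measurable (f i)) :
    Measurable (fun b => ⨆ i, f i b) := Measurable.iSup hf

lemma Zx_measurable (M : EdgeData Ω) (x : ℤ) : Measurable (Zx M x) :=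
  Measurable.iSup fun y => (gmax_measurable _).comp (M.v_meas x y.1)

lemma Zx_measurable_comap (M : EdgeData Ω) (x : ℤ) :
    MeasurableSpace.comap (Zx M x) inferInstance
      ≤ ⨆ e ∈ {e : {e : ℤ × ℤ // e.1 < e.2} | e.1.1 = x},
          MeasurableSpace.comap (fun ω => M.v e.1.1 e.1.2 ω) inferInstance := by
  set m' := ⨆ e ∈ {e : {e : ℤ × ℤ // e.1 < e.2} | e.1.1 = x},
      MeasurableSpace.comap (fun ω => M.v e.1.1 e.1.2 ω)
        (inferInstance : MeasurableSpace EReal) with hm'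
  have hv : ∀ y : {y : ℤ // x < y}, @Measurable Ω EReal m' _ (M.v x y.1) := by
    intro y
    rw [measurable_iff_comap_le, hm']
    exact le_iSup₂ (f := fun (e : {e : ℤ × ℤ // e.1 < e.2})
      (_ : e ∈ {e : {e : ℤ × ℤ // e.1 < e.2} | e.1.1 = x}) =>
        MeasurableSpace.comap (fun ω => M.v e.1.1 e.1.2 ω)
          (inferInstance : MeasurableSpace EReal))
      (⟨(x, y.1), y.2⟩ : {e : ℤ × ℤ // e.1 < e.2}) rfl
  have : @Measurable Ω EReal m' _ (Zx M x) :=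
    measurable_iSup' (mδ := m')
      (f := fun y : {y : ℤ // x < y} =>
        fun ω => max (M.v x y.1 ω - (((y.1 - x : ℤ) : ℝ) : EReal)) 0)
      (fun y => (gmax_measurable _).comp (hv y))
  rwa [measurable_iff_comap_le] at this

lemma Zx_iIndep (M : EdgeData Ω) [IsProbabilityMeasure (ℙ : Measure Ω)] :
    iIndepFun (fun x : ℤ => Zx M x) ℙ := by
  rw [iIndepFun_iff_iIndep]
  have hpair : Pairwise (Function.onFun Disjoint
      (fun x : ℤ => {e : {e : ℤ × ℤ // e.1 < e.2} | e.1.1 = x})) := by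
    intro a b hab
    refine Set.disjoint_left.mpr ?_
    rintro e (he : e.1.1 = a) (he' : e.1.1 = b)
    exact hab (he ▸ he')
  have hgrp := iIndep_grouping (μ := (ℙ : Measure Ω))
    (fun e : {e : ℤ × ℤ // e.1 < e.2} => M.v_meas e.1.1 e.1.2) M.v_indep
    (fun x : ℤ => {e : {e : ℤ × ℤ // e.1 < e.2} | e.1.1 = x}) hpair
  exact iIndep_mono (fun x => Zx_measurable_comap M x) hgrp

end ZxMeas

section ZxIdent
variable {Ω : Type} [MeasureSpace Ω]

/-- target set for `n`-th edge, independent of `x` -/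
def Sn (n : ℕ) (t : EReal) : Set EReal :=
  {a : EReal | max (a - (((1 + n : ℤ) : ℝ) : EReal)) 0 ≤ t}

lemma Sn_measurable (n : ℕ) (t : EReal) : MeasurableSet (Sn n t) :=
  gmax_measurable (((1 + n : ℤ) : ℝ) : EReal) measurableSet_Iic

lemma Zx_preimage_Iic (M : EdgeData Ω) (x : ℤ) (t : EReal) :
    Zx M x ⁻¹' Set.Iic t = ⋂ n : ℕ, M.v x (x + 1 + n) ⁻¹' Sn n t := by
  ext ω
  simp only [Set.mem_preimage, Set.mem_Iic, Zx, iSup_le_iff, Set.mem_iInter, Sn, Set.mem_setOf_eq]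
  constructor
  · intro h n
    have := h ⟨x + 1 + n, by omega⟩
    rwa [show (x + 1 + (n : ℤ) - x : ℤ) = 1 + n by ring] at this
  · intro h y
    obtain ⟨y, hy⟩ := y
    have hn : y = x + 1 + ((y - x - 1).toNat : ℤ) := by omega
    have := h (y - x - 1).toNat
    rw [← hn] at this
    rwa [show (1 + ((y - x - 1).toNat : ℤ) : ℤ) = y - x by omega] at this

lemma measure_Zx_Iic (M : EdgeData Ω) [IsProbabilityMeasure (ℙ : Measure Ω)] (x : ℤ) (t : EReal) :
    ℙ (Zx M x ⁻¹' Set.Iic t)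
      = ⨅ N : ℕ, ∏ n ∈ Finset.range N, Measure.map (M.v 0 1) ℙ (Sn n t) := by
  classical
  set B : ℕ → Set Ω := fun n => M.v x (x + 1 + n) ⁻¹' Sn n t with hB
  have hBmeas : ∀ n, MeasurableSet (B n) := fun n => M.v_meas _ _ (Sn_measurable n t)
  set s : ℕ → Set Ω := fun N => ⋂ n ∈ Finset.range N, B n with hsdef
  have hanti : Antitone s := by
    intro N N' h ω hω
    rw [Set.mem_iInter₂] at hω ⊢
    intro n hn
    exact hω n (Finset.mem_range.mpr (lt_of_lt_of_le (Finset.mem_range.mp hn) h))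
  have heq : ⋂ n, B n = ⋂ N, s N := by
    ext ω
    simp only [Set.mem_iInter]
    constructor
    · intro h N
      rw [Set.mem_iInter₂]
      exact fun n _ => h n
    · intro h n
      have := h (n + 1)
      rw [Set.mem_iInter₂] at this
      exact this n (Finset.mem_range.mpr (Nat.lt_succ_self n))
  have hprod : ∀ N, ℙ (s N) = ∏ n ∈ Finset.range N, ℙ (B n) := by
    intro N
    set em : ℕ → {e : ℤ × ℤ // e.1 < e.2} := fun n => ⟨(x, x + 1 + n), by omega⟩ with hem
    have hem_inj : Function.Injective em := by
      intro a b h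
      rw [hem, Subtype.ext_iff, Prod.ext_iff] at h
      simp only at h
      omega
    set sets : {e : ℤ × ℤ // e.1 < e.2} → Set EReal :=
      fun e => Sn (e.1.2 - e.1.1 - 1).toNat t with hsets
    have hsets_em : ∀ n : ℕ, sets (em n) = Sn n t := by
      intro n
      have h1 : ((x + 1 + (n : ℤ)) - x - 1).toNat = n := by omega
      show Sn ((x + 1 + (n : ℤ)) - x - 1).toNat t = Sn n t
      rw [h1]
    have key := (iIndepFun_iff_measure_inter_preimage_eq_mul.mp M.v_indep)
      ((Finset.range N).image em) (sets := sets)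
      (fun e _ => Sn_measurable _ t)
    rw [Finset.set_biInter_finset_image, Finset.prod_image
      (fun a _ b _ h => hem_inj h)] at key
    have hterm : ∀ n : ℕ,
        (fun ω => M.v (em n).1.1 (em n).1.2 ω) ⁻¹' sets (em n) = B n := by
      intro n
      rw [hsets_em n, hB]
    calc ℙ (s N) = ℙ (⋂ n ∈ Finset.range N,
          (fun ω => M.v (em n).1.1 (em n).1.2 ω) ⁻¹' sets (em n)) := by
          rw [hsdef]
          congr 1
          exact Set.iInter₂_congr fun n _ => (hterm n).symm
      _ = ∏ n ∈ Finset.range N,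
            ℙ ((fun ω => M.v (em n).1.1 (em n).1.2 ω) ⁻¹' sets (em n)) := key
      _ = ∏ n ∈ Finset.range N, ℙ (B n) :=
            Finset.prod_congr rfl fun n _ => by rw [hterm n]
  have hfac : ∀ n, ℙ (B n) = Measure.map (M.v 0 1) ℙ (Sn n t) := by
    intro n
    rw [hB]
    rw [← Measure.map_apply (M.v_meas x (x + 1 + n)) (Sn_measurable n t)]
    rw [M.v_ident x (x + 1 + n) (by omega)]
  calc ℙ (Zx M x ⁻¹' Set.Iic t) = ℙ (⋂ n, B n) := by rw [Zx_preimage_Iic]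
    _ = ℙ (⋂ N, s N) := by rw [heq]
    _ = ⨅ N, ℙ (s N) := Directed.measure_iInter
        (fun N => ((Finset.measurableSet_biInter _ fun n _ => hBmeas n).nullMeasurableSet))
        (fun N M => ⟨max N M, hanti (le_max_left N M), hanti (le_max_right N M)⟩)
        ⟨0, measure_ne_top _ _⟩
    _ = ⨅ N, ∏ n ∈ Finset.range N, Measure.map (M.v 0 1) ℙ (Sn n t) := by
        refine iInf_congr fun N => ?_
        rw [hprod N]
        exact Finset.prod_congr rfl fun n _ => hfac n

lemma Zx_ident (M : EdgeData Ω) [IsProbabilityMeasure (ℙ : Measure Ω)] (x : ℤ) :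
    Measure.map (Zx M x) ℙ = Measure.map (Zx M 0) ℙ := by
  haveI h1 : IsProbabilityMeasure (Measure.map (Zx M x) ℙ) :=
    Measure.isProbabilityMeasure_map (Zx_measurable M x).aemeasurable
  haveI h2 : IsProbabilityMeasure (Measure.map (Zx M 0) ℙ) :=
    Measure.isProbabilityMeasure_map (Zx_measurable M 0).aemeasurable
  refine MeasureTheory.Measure.ext_of_Iic _ _ fun t => ?_
  rw [Measure.map_apply (Zx_measurable M x) measurableSet_Iic,
      Measure.map_apply (Zx_measurable M 0) measurableSet_Iic,
      measure_Zx_Iic, measure_Zx_Iic]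

end ZxIdent
/-- **The pathwise upper bound (proof of Lemma 5).** Almost surely, for all `j < k`,
`w_{j,k} ≤ (k - j) + Σ_{j ≤ x < y ≤ k} max (v_{x,y} - (y - x), 0)`; consequently, for any
`ℕ`-valued random variable `G` (e.g. `Γ₀`),
`w_{0,G} ≤ G + Σ_{x=0}^{G-1} Z_x`, where the `Z_x` are i.i.d. -/
theorem pathwise_weight_bound {Ω : Type} [MeasureSpace Ω]
    [IsProbabilityMeasure (ℙ : Measure Ω)]
    (M : EdgeData Ω) :
    (∀ᵐ ω ∂ℙ, ∀ j k : ℤ, j < k →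
      w M j k ω ≤ (((k - j : ℤ) : ℝ) : EReal)
        + ∑ p ∈ (Finset.Icc j k ×ˢ Finset.Icc j k).filter (fun p => p.1 < p.2),
            max (M.v p.1 p.2 ω - (((p.2 - p.1 : ℤ) : ℝ) : EReal)) 0) ∧
    (∀ G : Ω → ℕ, ∀ᵐ ω ∂ℙ,
      w M 0 (G ω : ℤ) ω ≤ ((G ω : ℝ) : EReal)
        + ∑ i ∈ Finset.range (G ω), Zx M (i : ℤ) ω) ∧
    iIndepFun (fun x : ℤ => Zx M x) ℙ ∧
    (∀ x : ℤ, Measure.map (Zx M x) ℙ = Measure.map (Zx M 0) ℙ) :=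
  ⟨ae_of_all _ fun ω j k hjk => w_le_bound M ω j k hjk,
    fun G => ae_of_all _ fun ω => w_le_Zx M ω (G ω),
    Zx_iIndep M, fun x => Zx_ident M x⟩

end MaxPathWeight
end
end
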